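/- Let M be an n×n real positive semidefinite matrix and ζ > 0. Then for every n×n real positive definite matrix S, Tr(S⁻¹ M) + ζ·Tr(S⁻¹) + Tr(S) ≥ 2·Tr(√(M + ζI)), with equality when S = √(M + ζI), the positive definite square root of M + ζI. -/

import Mathlib

open Matrix

section
open scoped ComplexOrder

/-- The positive semidefinite square root of a positive semidefinite matrix
(removed from Mathlib; restored with its December 2024 definition). -/
noncomputable def Matrix.PosSemidef.sqrt {n : Type*} [Fintype n] [DecidableEq n] {𝕜 : Type*}
    [RCLike 𝕜] {A : Matrix n n 𝕜} (hA : A.PosSemidef) : Matrix n n 𝕜 :=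
  hA.1.eigenvectorUnitary.1 * diagonal ((↑) ∘ (√·) ∘ hA.1.eigenvalues) *
  (star hA.1.eigenvectorUnitary : Matrix n n 𝕜)

end

section
open scoped ComplexOrder

lemma Matrix.PosSemidef.posSemidef_sqrt {n : Type*} [Fintype n] [DecidableEq n] {𝕜 : Type*}
    [RCLike 𝕜] {A : Matrix n n 𝕜} (hA : A.PosSemidef) : hA.sqrt.PosSemidef := by
  rw [Matrix.PosSemidef.sqrt]
  rw [(Unitary.isUnit_coe).posSemidef_star_right_conjugate_iff, posSemidef_diagonal_iff]
  intro i
  exact RCLike.ofReal_nonneg.mpr (Real.sqrt_nonneg _)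

lemma Matrix.PosSemidef.sqrt_mul_self {n : Type*} [Fintype n] [DecidableEq n] {𝕜 : Type*}
    [RCLike 𝕜] {A : Matrix n n 𝕜} (hA : A.PosSemidef) : hA.sqrt * hA.sqrt = A := by
  have hU : (star hA.1.eigenvectorUnitary : Matrix n n 𝕜) * hA.1.eigenvectorUnitary.1 = 1 :=
    Unitary.star_mul_self_of_mem hA.1.eigenvectorUnitary.2
  have hD : diagonal (((↑) ∘ (√·) ∘ hA.1.eigenvalues) : n → 𝕜) *
      diagonal (((↑) ∘ (√·) ∘ hA.1.eigenvalues) : n → 𝕜) =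
      diagonal (RCLike.ofReal ∘ hA.1.eigenvalues : n → 𝕜) := by
    rw [diagonal_mul_diagonal]; congr 1; funext i
    simp only [Function.comp_apply, ← RCLike.ofReal_mul, Real.mul_self_sqrt (hA.eigenvalues_nonneg i)]
  conv_rhs => rw [hA.1.spectral_theorem, Unitary.conjStarAlgAut_apply]
  rw [Matrix.PosSemidef.sqrt]
  simp only [Matrix.mul_assoc]
  rw [← Matrix.mul_assoc _ (hA.1.eigenvectorUnitary.1), hU, Matrix.one_mul,
    ← Matrix.mul_assoc (diagonal _), hD]

end


lemma psd_trace_nonneg {n : ℕ} {A : Matrix (Fin n) (Fin n) ℝ} (hA : A.PosSemidef) :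
    0 ≤ A.trace := by
  exact hA.trace_nonneg

theorem perturbed_variational_formula (n : ℕ) (M : Matrix (Fin n) (Fin n) ℝ)
    (hM : M.PosSemidef) (ζ : ℝ) (hζ : 0 < ζ)
    (hMζ : (M + ζ • (1 : Matrix (Fin n) (Fin n) ℝ)).PosSemidef) :
    (∀ S : Matrix (Fin n) (Fin n) ℝ, S.PosDef →
      2 * Matrix.trace hMζ.sqrt ≤
        Matrix.trace (S⁻¹ * M) + ζ * Matrix.trace S⁻¹ + Matrix.trace S) ∧
    Matrix.trace ((hMζ.sqrt)⁻¹ * M) + ζ * Matrix.trace (hMζ.sqrt)⁻¹ +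
        Matrix.trace hMζ.sqrt =
      2 * Matrix.trace hMζ.sqrt := by
  have hN : (M + ζ • (1 : Matrix (Fin n) (Fin n) ℝ)).PosDef := by
    exact Matrix.PosDef.posSemidef_add hM (Matrix.PosDef.one.smul hζ)
  set Q := hMζ.sqrt with hQdef
  have hQ : Q.PosSemidef := hMζ.posSemidef_sqrt
  have hQQ : Q * Q = M + ζ • (1 : Matrix (Fin n) (Fin n) ℝ) := hMζ.sqrt_mul_self
  have hdet : IsUnit Q.det := by
    have hd : Q.det * Q.det = (M + ζ • (1 : Matrix (Fin n) (Fin n) ℝ)).det := by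
      rw [← det_mul, hQQ]
    have hNd := hN.det_pos
    have hne : Q.det ≠ 0 := by
      intro h; rw [h, mul_zero] at hd; exact hNd.ne hd
    exact hne.isUnit
  have hQinv : Q⁻¹ * Q = 1 := nonsing_inv_mul _ hdet
  constructor
  · intro S hS
    have hSinv : S⁻¹.PosDef := hS.inv
    have hSdet : IsUnit S.det := hS.det_pos.ne'.isUnit
    have hSinvS : S⁻¹ * S = 1 := nonsing_inv_mul _ hSdet
    have hSSinv : S * S⁻¹ = 1 := mul_nonsing_inv _ hSdet
    have hBH : (Q - S)ᴴ = Q - S := by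
      rw [conjTranspose_sub, hQ.1, hS.1]
    have key : ((Q - S)ᴴ * S⁻¹ * (Q - S)).PosSemidef :=
      hSinv.posSemidef.conjTranspose_mul_mul_same (Q - S)
    rw [hBH] at key
    have h0 : 0 ≤ ((Q - S) * S⁻¹ * (Q - S)).trace := psd_trace_nonneg key
    have expand : (Q - S) * S⁻¹ * (Q - S)
        = Q * (S⁻¹ * Q) - Q * (S⁻¹ * S) - S * S⁻¹ * Q + S * S⁻¹ * S := by
      noncomm_ring
    rw [expand, hSinvS, hSSinv, Matrix.mul_one] at h0
    simp only [Matrix.one_mul] at h0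
    have htr : (Q * (S⁻¹ * Q)).trace = (S⁻¹ * M).trace + ζ * S⁻¹.trace := by
      rw [trace_mul_comm, Matrix.mul_assoc, hQQ, Matrix.mul_add, Matrix.mul_smul,
        Matrix.mul_one, trace_add, trace_smul, smul_eq_mul]
    rw [trace_add, trace_sub, trace_sub, htr] at h0
    linarith
  · have hQinvN : Q⁻¹ * M + ζ • Q⁻¹ = Q := by
      have h1 : Q⁻¹ * (M + ζ • (1 : Matrix (Fin n) (Fin n) ℝ)) = Q := by
        rw [← hQQ, ← Matrix.mul_assoc, hQinv, Matrix.one_mul]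
      have h2 : Q⁻¹ * M + ζ • Q⁻¹ = Q⁻¹ * (M + ζ • (1 : Matrix (Fin n) (Fin n) ℝ)) := by
        rw [Matrix.mul_add, Matrix.mul_smul, Matrix.mul_one]
      rw [h2, h1]
    have htr : (Q⁻¹ * M).trace + ζ * Q⁻¹.trace = Q.trace := by
      have h3 : ((ζ:ℝ) • Q⁻¹).trace = ζ * Q⁻¹.trace := by
        rw [trace_smul, smul_eq_mul]
      rw [← h3, ← trace_add, hQinvN]
    rw [htr]; ring
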